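/- Let G = (N,A) be a loopless digraph in which every node has equal in-degree and out-degree and which has at least one arc, let P be the 0/1-circulation polytope of G, let 0 ∈ P be the zero flow and 1 ∈ P the full flow, and let c(G) be the minimum number of cycles in a partition of the arc set of G into arc-disjoint directed cycles. Then: (a) the circuit distance from 0 to 1 is at most c(G); and (b) the minimum length of a list that is simultaneously a circuit walk from 0 to 1 and a sign-compatible circuit decomposition of 1 − 0 equals c(G). -/

import Mathlib

open Matrix

/-- `g` is a circuit of the polyhedron `{x : A x = b, B x ≤ d}` with respect to the
description `(A, B)`: a nonzero element of `ker A` with coprime integral components such that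
`B g` is support-minimal among `{B x : x ∈ ker A, x ≠ 0}`. -/
def IsCircuit {mA mB n : Type*} [Fintype n]
    (A : Matrix mA n ℝ) (B : Matrix mB n ℝ) (g : n → ℝ) : Prop :=
  A.mulVec g = 0 ∧ g ≠ 0 ∧
  (∃ z : n → ℤ, (∀ i, (z i : ℝ) = g i) ∧ Finset.univ.gcd z = 1) ∧
  ∀ x : n → ℝ, A.mulVec x = 0 → x ≠ 0 →
    ¬ (Function.support (B.mulVec x) ⊂ Function.support (B.mulVec g))

/-- Membership in the polyhedron `{x : A x = b, B x ≤ d}`. -/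
def InPoly {mA mB n : Type*} [Fintype n] (A : Matrix mA n ℝ) (b : mA → ℝ)
    (B : Matrix mB n ℝ) (d : mB → ℝ) (x : n → ℝ) : Prop :=
  A.mulVec x = b ∧ B.mulVec x ≤ d

/-- `((g 0, lam 0), …, (g (r-1), lam (r-1)))` is a (maximal) circuit walk from `x` to `y`
in the polyhedron `{x : A x = b, B x ≤ d}`. -/
def IsCircuitWalk {mA mB n : Type*} [Fintype n]
    (A : Matrix mA n ℝ) (b : mA → ℝ) (B : Matrix mB n ℝ) (d : mB → ℝ)
    (x y : n → ℝ) (r : ℕ) (g : Fin r → n → ℝ) (lam : Fin r → ℝ) : Prop :=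
  (∀ i, IsCircuit A B (g i)) ∧
  (∀ i, 0 < lam i) ∧
  (∀ k : Fin r, InPoly A b B d (x + ∑ i ∈ Finset.univ.filter (fun i => i ≤ k), lam i • g i)) ∧
  (x + ∑ i, lam i • g i = y) ∧
  (∀ k : Fin r, ∀ mu : ℝ, lam k < mu →
    ¬ InPoly A b B d ((x + ∑ i ∈ Finset.univ.filter (fun i => i < k), lam i • g i) + mu • g k))

/-- `u` and `u'` are sign-compatible with respect to `B`. -/
def SignCompat {mB n : Type*} [Fintype n] (B : Matrix mB n ℝ) (u u' : n → ℝ) : Prop :=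
  ∀ i, 0 ≤ B.mulVec u i * B.mulVec u' i

/-- Sign-compatible circuit decomposition of the vector `u` with respect to `(A, B)`. -/
def IsSCDecomp {mA mB n : Type*} [Fintype n]
    (A : Matrix mA n ℝ) (B : Matrix mB n ℝ) (u : n → ℝ)
    (r : ℕ) (g : Fin r → n → ℝ) (lam : Fin r → ℝ) : Prop :=
  (∀ i, IsCircuit A B (g i)) ∧ (∀ i, 0 < lam i) ∧ (∑ i, lam i • g i = u) ∧
  ∀ i j, SignCompat B (g i) (g j)

/-- A loopless digraph with node type `N` and arc type `α`. -/
structure Digraph' (N α : Type*) where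
  src : α → N
  dst : α → N
  loopless : ∀ a, src a ≠ dst a

/-- The node-arc incidence matrix of a digraph. -/
def incMat {N α : Type*} [DecidableEq N] (G : Digraph' N α) : Matrix N α ℝ :=
  Matrix.of fun v a => if G.src a = v then 1 else if G.dst a = v then -1 else 0

/-- The inequality system `x ≤ 1`-style box constraints: rows of the identity followed by
rows of the negative identity. -/
def boxB (α : Type*) [DecidableEq α] : Matrix (α ⊕ α) α ℝ :=
  Matrix.fromRows 1 (-1)

/-- Right-hand side for the box constraints `x ≤ 1`, `-x ≤ 0` of the 0/1-circulation polytope. -/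
def boxd (α : Type*) : α ⊕ α → ℝ := Sum.elim (fun _ => 1) (fun _ => 0)

/-- In-degree of a node. -/
def inDeg {N α : Type*} [Fintype α] [DecidableEq N] (G : Digraph' N α) (v : N) : ℕ :=
  (Finset.univ.filter fun a => G.dst a = v).card

/-- Out-degree of a node. -/
def outDeg {N α : Type*} [Fintype α] [DecidableEq N] (G : Digraph' N α) (v : N) : ℕ :=
  (Finset.univ.filter fun a => G.src a = v).card

/-- `S` is the arc set of a simple dicycle of `G` (a directed cycle with no repeated nodes). -/
def IsSimpleDicycle {N α : Type*} (G : Digraph' N α) (S : Set α) : Prop :=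
  ∃ (k : ℕ) (e : Fin (k+1) → α) (v : Fin (k+1) → N),
    Function.Injective e ∧ Function.Injective v ∧ S = Set.range e ∧
    ∀ i, G.src (e i) = v i ∧ G.dst (e i) = v (i + 1)

/-- `S` is the arc set of a simple Hamiltonian dicycle of `G`. -/
def IsHamiltonianDicycle {N α : Type*} (G : Digraph' N α) (S : Set α) : Prop :=
  ∃ (k : ℕ) (e : Fin (k+1) → α) (v : Fin (k+1) → N),
    Function.Injective e ∧ Function.Bijective v ∧ S = Set.range e ∧
    ∀ i, G.src (e i) = v i ∧ G.dst (e i) = v (i + 1)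

/-- `G` decomposes into two simple Hamiltonian dicycles. -/
def DecompTwoHamiltonian {N α : Type*} (G : Digraph' N α) : Prop :=
  ∃ S₁ S₂ : Set α, IsHamiltonianDicycle G S₁ ∧ IsHamiltonianDicycle G S₂ ∧
    Disjoint S₁ S₂ ∧ S₁ ∪ S₂ = Set.univ

/-- The arc set of `G` is partitioned into `c` arc-disjoint simple directed cycles. -/
def PartitionsIntoCycles {N α : Type*} (G : Digraph' N α) (c : ℕ) : Prop :=
  ∃ S : Fin c → Set α, (∀ i, IsSimpleDicycle G (S i)) ∧
    (∀ i j, i ≠ j → Disjoint (S i) (S j)) ∧ (⋃ i, S i) = Set.univ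


/-! ### Auxiliary machinery -/

section AuxBasic
variable {α : Type*} [Fintype α] [DecidableEq α]

open Classical in
noncomputable def indic {α : Type*} (S : Set α) : α → ℝ := fun a => if a ∈ S then 1 else 0

lemma indic_mem {α : Type*} {S : Set α} {a : α} (h : a ∈ S) : indic S a = 1 := by simp [indic, h]
lemma indic_not_mem {α : Type*} {S : Set α} {a : α} (h : a ∉ S) : indic S a = 0 := by simp [indic, h]
lemma indic_nonneg {α : Type*} (S : Set α) (a : α) : 0 ≤ indic S a := by
  unfold indic; split <;> norm_num
lemma indic_le_one {α : Type*} (S : Set α) (a : α) : indic S a ≤ 1 := by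
  unfold indic; split <;> norm_num
lemma indic_ne_zero_iff {α : Type*} {S : Set α} {a : α} : indic S a ≠ 0 ↔ a ∈ S := by
  unfold indic; split <;> simp_all
lemma support_indic {α : Type*} (S : Set α) : Function.support (indic S) = S := by
  ext a; simp [Function.mem_support, indic_ne_zero_iff]

lemma boxB_mulVec (x : α → ℝ) : (boxB α).mulVec x = Sum.elim x (-x) := by
  rw [boxB, Matrix.fromRows_mulVec, Matrix.neg_mulVec, Matrix.one_mulVec]

lemma boxB_le_boxd_iff (x : α → ℝ) :
    (boxB α).mulVec x ≤ boxd α ↔ ∀ a, 0 ≤ x a ∧ x a ≤ 1 := by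
  rw [boxB_mulVec]
  constructor
  · intro h a
    have h1 := h (Sum.inl a)
    have h2 := h (Sum.inr a)
    simp [boxd] at h1 h2
    constructor <;> linarith
  · intro h i
    rcases i with a | a
    · simpa [boxd] using (h a).2
    · simpa [boxd] using (h a).1

lemma support_boxB_subset_iff (x g : α → ℝ) :
    Function.support ((boxB α).mulVec x) ⊆ Function.support ((boxB α).mulVec g) ↔
      Function.support x ⊆ Function.support g := by
  rw [boxB_mulVec, boxB_mulVec]
  constructor
  · intro h a ha
    have : Sum.elim x (-x) (Sum.inl a) ≠ 0 := by simpa using ha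
    have := h this
    simpa using this
  · intro h i hi
    rcases i with a | a
    · have : x a ≠ 0 := by simpa using hi
      simpa using h this
    · have : x a ≠ 0 := by simpa using hi
      simpa using h this

lemma support_boxB_ssubset_iff (x g : α → ℝ) :
    Function.support ((boxB α).mulVec x) ⊂ Function.support ((boxB α).mulVec g) ↔
      Function.support x ⊂ Function.support g := by
  rw [Set.ssubset_def, Set.ssubset_def, support_boxB_subset_iff, support_boxB_subset_iff]

end AuxBasic

section Cyc
variable {N α : Type*} [Fintype N] [Fintype α] [DecidableEq N] [DecidableEq α]
variable (G : Digraph' N α)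

lemma incMat_mulVec' (x : α → ℝ) (w : N) :
    (incMat G).mulVec x w =
      ∑ a, ((if G.src a = w then (1:ℝ) else 0) - (if G.dst a = w then 1 else 0)) * x a := by
  simp only [Matrix.mulVec, dotProduct, incMat, Matrix.of_apply]
  apply Finset.sum_congr rfl
  intro a _
  congr 1
  by_cases h1 : G.src a = w
  · have h2 : G.dst a ≠ w := fun h => G.loopless a (h1.trans h.symm)
    simp [h1, h2]
  · by_cases h2 : G.dst a = w <;> simp [h1, h2]

variable {k : ℕ} {e : Fin (k+1) → α} {v : Fin (k+1) → N}

lemma cycle_mulVec (he : Function.Injective e)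
    (hsrc : ∀ i, G.src (e i) = v i) (hdst : ∀ i, G.dst (e i) = v (i+1))
    (x : α → ℝ) (hx : ∀ a, a ∉ Set.range e → x a = 0) (w : N) :
    (incMat G).mulVec x w =
      ∑ i : Fin (k+1), ((if v i = w then (1:ℝ) else 0) - (if v (i+1) = w then 1 else 0)) * x (e i) := by
  rw [incMat_mulVec']
  rw [show (Finset.univ : Finset α) = Finset.univ.image e ∪ (Finset.univ \ Finset.univ.image e) by
    simp [Finset.union_sdiff_of_subset]]
  rw [Finset.sum_union (Finset.disjoint_sdiff)]
  have h2 : ∑ a ∈ Finset.univ \ Finset.univ.image e,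
      ((if G.src a = w then (1:ℝ) else 0) - (if G.dst a = w then 1 else 0)) * x a = 0 := by
    apply Finset.sum_eq_zero
    intro a ha
    have : a ∉ Set.range e := by
      simp only [Finset.mem_sdiff, Finset.mem_image] at ha
      intro ⟨i, hi⟩
      exact ha.2 ⟨i, Finset.mem_univ i, hi⟩
    rw [hx a this, mul_zero]
  rw [h2, add_zero, Finset.sum_image (fun i _ j _ h => he h)]
  apply Finset.sum_congr rfl
  intro i _
  rw [hsrc, hdst]

lemma cycle_circulation (he : Function.Injective e)
    (hsrc : ∀ i, G.src (e i) = v i) (hdst : ∀ i, G.dst (e i) = v (i+1)) :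
    (incMat G).mulVec (indic (Set.range e)) = 0 := by
  funext w
  rw [cycle_mulVec G he hsrc hdst _ (fun a ha => indic_not_mem ha)]
  have h1 : ∀ i : Fin (k+1), indic (Set.range e) (e i) = 1 :=
    fun i => indic_mem (Set.mem_range_self i)
  simp only [h1, mul_one, Finset.sum_sub_distrib, Pi.zero_apply]
  rw [Fintype.sum_equiv (Equiv.addRight 1) (fun i => if v (i+1) = w then (1:ℝ) else 0)
    (fun i => if v i = w then (1:ℝ) else 0) (fun i => rfl)]
  ring

open Fin.NatCast Fin.CommRing in
lemma cycle_constant (he : Function.Injective e) (hv : Function.Injective v)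
    (hsrc : ∀ i, G.src (e i) = v i) (hdst : ∀ i, G.dst (e i) = v (i+1))
    (x : α → ℝ) (hx0 : (incMat G).mulVec x = 0) (hx : ∀ a, a ∉ Set.range e → x a = 0) :
    ∀ j, x (e j) = x (e 0) := by
  have step : ∀ j : Fin (k+1), x (e (j+1)) = x (e j) := by
    intro j
    have h := congrFun hx0 (v (j+1))
    rw [cycle_mulVec G he hsrc hdst x hx (v (j+1))] at h
    have h1 : ∀ i : Fin (k+1), ((v i = v (j+1)) ↔ (i = j+1)) := fun i => hv.eq_iff
    have h2 : ∀ i : Fin (k+1), ((v (i+1) = v (j+1)) ↔ (i = j)) := by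
      intro i
      rw [hv.eq_iff]
      constructor
      · intro h'; exact add_right_cancel h'
      · intro h'; rw [h']
    simp only [Pi.zero_apply] at h
    have h3 : ∑ i : Fin (k+1), ((if v i = v (j+1) then (1:ℝ) else 0) - (if v (i+1) = v (j+1) then 1 else 0)) * x (e i)
        = x (e (j+1)) - x (e j) := by
      simp only [h1, h2, add_left_inj, sub_mul, Finset.sum_sub_distrib, ite_mul, one_mul, zero_mul]
      rw [Finset.sum_ite_eq' Finset.univ (j+1) (fun i => x (e i)),
          Finset.sum_ite_eq' Finset.univ j (fun i => x (e i))]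
      simp
    rw [h3] at h
    linarith
  have key : ∀ n : ℕ, x (e ((n : Fin (k+1)))) = x (e 0) := by
    intro n
    induction n with
    | zero => simp
    | succ m ih =>
      have : ((m+1 : ℕ) : Fin (k+1)) = ((m : ℕ) : Fin (k+1)) + 1 := by push_cast; ring
      rw [this, step, ih]
  intro j
  have := key j.val
  rwa [Fin.cast_val_eq_self] at this

end Cyc


section Cyc2
variable {N α : Type*} [Fintype N] [Fintype α] [DecidableEq N] [DecidableEq α]
variable (G : Digraph' N α)

lemma cycle_isCircuit {k : ℕ} {e : Fin (k+1) → α} {v : Fin (k+1) → N}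
    (he : Function.Injective e) (hv : Function.Injective v)
    (hsrc : ∀ i, G.src (e i) = v i) (hdst : ∀ i, G.dst (e i) = v (i+1)) :
    IsCircuit (incMat G) (boxB α) (indic (Set.range e)) := by
  classical
  refine ⟨cycle_circulation G he hsrc hdst, ?_, ?_, ?_⟩
  · intro h
    have := congrFun h (e 0)
    rw [indic_mem (Set.mem_range_self 0)] at this
    simpa using this
  · refine ⟨fun a => if a ∈ Set.range e then 1 else 0, ?_, ?_⟩
    · intro a
      by_cases h : a ∈ Set.range e
      · simp [h, indic_mem h]
      · simp [h, indic_not_mem h]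
    · have h1 : Finset.univ.gcd (fun a => if a ∈ Set.range e then (1:ℤ) else 0) ∣ 1 := by
        have := Finset.gcd_dvd (f := fun a => if a ∈ Set.range e then (1:ℤ) else 0)
          (Finset.mem_univ (e 0))
        simpa [Set.mem_range_self] using this
      have h2 := Int.isUnit_iff.mp (isUnit_of_dvd_one h1)
      rcases h2 with h2 | h2
      · exact h2
      · exfalso
        have h3 := Finset.normalize_gcd (s := (Finset.univ : Finset α))
          (f := fun a => if a ∈ Set.range e then (1:ℤ) else 0)
        rw [h2, ← Int.abs_eq_normalize] at h3
        norm_num at h3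
  · intro x hx0 hxne hss
    rw [support_boxB_ssubset_iff, support_indic] at hss
    obtain ⟨a, haE, hax⟩ := Set.exists_of_ssubset hss
    obtain ⟨j, rfl⟩ := haE
    have hxa : x (e j) = 0 := by
      by_contra h; exact hax h
    have hoff : ∀ b, b ∉ Set.range e → x b = 0 := by
      intro b hb
      by_contra h
      exact hb (hss.1 h)
    have hconst := cycle_constant G he hv hsrc hdst x hx0 hoff
    apply hxne
    funext b
    by_cases hb : b ∈ Set.range e
    · obtain ⟨i, rfl⟩ := hb
      rw [Pi.zero_apply, hconst i, ← hconst j, hxa]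
    · exact hoff b hb

lemma exists_pos_next (g : α → ℝ) (hg0 : (incMat G).mulVec g = 0) (hpos : ∀ a, 0 ≤ g a)
    {a : α} (ha : 0 < g a) : ∃ b, 0 < g b ∧ G.src b = G.dst a := by
  by_contra h
  push_neg at h
  set w := G.dst a with hw
  have h0 := congrFun hg0 w
  rw [incMat_mulVec'] at h0
  simp only [Pi.zero_apply] at h0
  have e1 : ∀ b : α, ((if G.src b = w then (1:ℝ) else 0) - (if G.dst b = w then 1 else 0)) * g b
      = (if G.src b = w then g b else 0) - (if G.dst b = w then g b else 0) := by
    intro b; split_ifs <;> ring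
  rw [Finset.sum_congr rfl (fun b _ => e1 b), Finset.sum_sub_distrib] at h0
  have h2 : ∑ b, (if G.src b = w then g b else 0) = 0 := by
    apply Finset.sum_eq_zero
    intro b _
    split_ifs with hb
    · exact le_antisymm (not_lt.mp fun hgb => h b hgb hb) (hpos b)
    · rfl
  have h3 : g a ≤ ∑ b, (if G.dst b = w then g b else 0) := by
    have := Finset.single_le_sum (f := fun b => if G.dst b = w then g b else 0)
      (fun b _ => by by_cases hb : G.dst b = w <;> simp [hb, hpos b]) (Finset.mem_univ a)
    simpa [hw] using this
  rw [h2] at h0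
  linarith

lemma exists_dicycle (g : α → ℝ) (hg0 : (incMat G).mulVec g = 0) (hpos : ∀ a, 0 ≤ g a)
    (hne : g ≠ 0) :
    ∃ (k : ℕ) (e : Fin (k+1) → α) (v : Fin (k+1) → N), Function.Injective e ∧
      Function.Injective v ∧ (∀ i, G.src (e i) = v i ∧ G.dst (e i) = v (i+1)) ∧
      (∀ i, 0 < g (e i)) := by
  classical
  obtain ⟨a0, ha0⟩ : ∃ a, 0 < g a := by
    by_contra h; push_neg at h; apply hne; funext a
    exact le_antisymm (h a) (hpos a)
  have step : ∀ p : {a // 0 < g a}, ∃ b : {a // 0 < g a}, G.src b.1 = G.dst p.1 := by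
    intro p
    obtain ⟨b, hb1, hb2⟩ := exists_pos_next G g hg0 hpos p.2
    exact ⟨⟨b, hb1⟩, hb2⟩
  choose F hF using step
  let f : ℕ → {a // 0 < g a} := fun n => F^[n] ⟨a0, ha0⟩
  have hf : ∀ n, G.src (f (n+1)).1 = G.dst (f n).1 := by
    intro n
    have h1 : f (n+1) = F (f n) := Function.iterate_succ_apply' F n _
    rw [h1]; exact hF _
  set u : ℕ → N := fun n => G.src (f n).1 with hu
  have hrep : ∃ n, ∃ m < n, u m = u n := by
    have hninj : ¬ Function.Injective (fun i : Fin (Fintype.card N + 1) => u i) := by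
      intro hinj
      have := Fintype.card_le_of_injective _ hinj
      rw [Fintype.card_fin] at this
      omega
    rw [Function.not_injective_iff] at hninj
    obtain ⟨i, j, hij, hne'⟩ := hninj
    rcases lt_or_gt_of_ne (fun h : i.val = j.val => hne' (Fin.ext h)) with h | h
    · exact ⟨j.val, i.val, h, hij⟩
    · exact ⟨i.val, j.val, h, hij.symm⟩
  have hspec := Nat.find_spec hrep
  set n := Nat.find hrep with hn
  obtain ⟨m, hmn, hum⟩ := hspec
  have hinj : ∀ i j, i < n → j < n → u i = u j → i = j := by
    intro i j hi hj hij
    by_contra hne'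
    rcases lt_or_gt_of_ne hne' with h | h
    · exact (Nat.find_min hrep hj) ⟨i, h, hij⟩
    · exact (Nat.find_min hrep hi) ⟨j, h, hij.symm⟩
  have hk : ∃ k : ℕ, n - m = k + 1 := ⟨n - m - 1, by omega⟩
  obtain ⟨k, hkeq⟩ := hk
  refine ⟨k, fun i => (f (m + i.val)).1, fun i => u (m + i.val), ?_, ?_, ?_, fun i => (f (m + i.val)).2⟩
  · intro i j hij
    have h1 : u (m + i.val) = u (m + j.val) := congrArg G.src hij
    have h2 := hinj (m + i.val) (m + j.val) (by have := i.isLt; omega)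
      (by have := j.isLt; omega) h1
    exact Fin.ext (by omega)
  · intro i j hij
    have := hinj (m + i.val) (m + j.val) (by have := i.isLt; omega) (by have := j.isLt; omega) hij
    exact Fin.ext (by omega)
  · intro i
    refine ⟨rfl, ?_⟩
    show G.dst (f (m + i.val)).1 = u (m + ((i + 1 : Fin (k+1))).val)
    have h1 : G.dst (f (m + i.val)).1 = u (m + i.val + 1) := (hf (m + i.val)).symm
    rw [h1]
    by_cases hik : i.val = k
    · have h2 : ((i + 1 : Fin (k+1))).val = 0 := by
        rw [Fin.val_add_one]
        simp [Fin.ext_iff, hik, Fin.last]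
      rw [h2]
      have h3 : m + i.val + 1 = n := by omega
      rw [h3, add_zero]
      exact hum.symm
    · have h2 : ((i + 1 : Fin (k+1))).val = i.val + 1 := by
        rw [Fin.val_add_one]
        have : i ≠ Fin.last k := by
          intro h; exact hik (by rw [h]; rfl)
        simp [this]
      rw [h2, ← add_assoc]

lemma nonneg_circuit_eq_indic (g : α → ℝ) (hc : IsCircuit (incMat G) (boxB α) g)
    (hpos : ∀ a, 0 ≤ g a) :
    ∃ (k : ℕ) (e : Fin (k+1) → α) (v : Fin (k+1) → N), Function.Injective e ∧
      Function.Injective v ∧ (∀ i, G.src (e i) = v i ∧ G.dst (e i) = v (i+1)) ∧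
      g = indic (Set.range e) := by
  obtain ⟨hg0, hgne, ⟨z, hz, hgcd⟩, hmin⟩ := hc
  obtain ⟨k, e, v, he, hv, hprop, hgpos⟩ := exists_dicycle G g hg0 hpos hgne
  have hsub : Set.range e ⊆ Function.support g := by
    rintro a ⟨i, rfl⟩
    exact (hgpos i).ne'
  have hind0 := cycle_circulation G he (fun i => (hprop i).1) (fun i => (hprop i).2)
  have hindne : indic (Set.range e) ≠ 0 := by
    intro h
    have := congrFun h (e 0)
    rw [indic_mem (Set.mem_range_self 0)] at this
    simpa using this
  have hnotss := hmin _ hind0 hindne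
  rw [support_boxB_ssubset_iff, support_indic] at hnotss
  have heq : Function.support g = Set.range e := by
    by_contra hne'
    exact hnotss ⟨hsub, fun h => hne' (Set.Subset.antisymm h hsub)⟩
  have hoff : ∀ b, b ∉ Set.range e → g b = 0 := by
    intro b hb
    by_contra h
    exact hb (heq ▸ (Function.mem_support.mpr h))
  have hconst := cycle_constant G he hv (fun i => (hprop i).1) (fun i => (hprop i).2) g hg0 hoff
  -- integrality forces the constant value to be 1
  set c := z (e 0) with hcdef
  have hcpos : 0 < c := by
    have : (0:ℝ) < (c:ℝ) := by rw [hz]; exact hgpos 0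
    exact_mod_cast this
  have hdvd : ∀ a, c ∣ z a := by
    intro a
    by_cases hb : a ∈ Set.range e
    · obtain ⟨i, rfl⟩ := hb
      have : (z (e i) : ℝ) = (c : ℝ) := by rw [hz, hz, hconst i]
      rw [show z (e i) = c from by exact_mod_cast this]
    · have : (z a : ℝ) = 0 := by rw [hz]; exact hoff a hb
      rw [show z a = 0 from by exact_mod_cast this]
      exact dvd_zero c
  have hc1 : c = 1 := by
    have : c ∣ 1 := hgcd ▸ Finset.dvd_gcd (fun a _ => hdvd a)
    exact Int.eq_one_of_dvd_one hcpos.le this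
  have hval : ∀ i, g (e i) = 1 := by
    intro i
    rw [hconst i, ← hz (e 0), ← hcdef, hc1]
    norm_num
  refine ⟨k, e, v, he, hv, hprop, ?_⟩
  funext a
  by_cases hb : a ∈ Set.range e
  · obtain ⟨i, rfl⟩ := hb
    rw [hval i, indic_mem (Set.mem_range_self i)]
  · rw [hoff a hb, indic_not_mem hb]

end Cyc2


section Walk
variable {N α : Type*} [Fintype N] [Fintype α] [DecidableEq N] [DecidableEq α]

lemma mulVec_sum_zero {ι : Type*} (M : Matrix N α ℝ) (T : Finset ι)
    (c : ι → ℝ) (x : ι → α → ℝ) (h : ∀ i ∈ T, M.mulVec (x i) = 0) :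
    M.mulVec (∑ i ∈ T, c i • x i) = 0 := by
  classical
  induction T using Finset.induction with
  | empty => simp
  | @insert j T hnot ih =>
    rw [Finset.sum_insert hnot, Matrix.mulVec_add, Matrix.mulVec_smul,
      h j (Finset.mem_insert_self _ _), ih (fun i hi => h i (Finset.mem_insert_of_mem hi))]
    simp

variable (G : Digraph' N α)

lemma walk_decomp_partition (r : ℕ) (g : Fin r → α → ℝ) (lam : Fin r → ℝ)
    (hwalk : IsCircuitWalk (incMat G) 0 (boxB α) (boxd α) (0 : α → ℝ) (1 : α → ℝ) r g lam)
    (hdec : IsSCDecomp (incMat G) (boxB α) ((1 : α → ℝ) - (0 : α → ℝ)) r g lam) :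
    PartitionsIntoCycles G r := by
  classical
  obtain ⟨hcirc, hlampos, hfeas, hend, hmax⟩ := hwalk
  obtain ⟨-, -, hsum, hsign⟩ := hdec
  rw [sub_zero] at hsum
  have hcons : ∀ i, (incMat G).mulVec (g i) = 0 := fun i => (hcirc i).1
  -- all the g i are nonnegative
  have hgnn : ∀ i a, 0 ≤ g i a := by
    by_contra h
    push_neg at h
    obtain ⟨i, a, hia⟩ := h
    have hall : ∀ j, g j a ≤ 0 := by
      intro j
      have hs := hsign j i (Sum.inr a)
      rw [boxB_mulVec, boxB_mulVec] at hs
      simp only [Sum.elim_inr, Pi.neg_apply, neg_mul_neg] at hs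
      by_contra hj
      push_neg at hj
      nlinarith
    have hsa := congrFun hsum a
    simp only [Finset.sum_apply, Pi.smul_apply, smul_eq_mul, Pi.one_apply] at hsa
    have hle : ∑ j, lam j * g j a ≤ 0 :=
      Finset.sum_nonpos (fun j _ => mul_nonpos_iff.mpr (Or.inl ⟨(hlampos j).le, hall j⟩))
    linarith
  -- each g i is the indicator of a simple dicycle
  choose kk ee vv hee hvv hprop hgind using
    fun i => nonneg_circuit_eq_indic G (g i) (hcirc i) (hgnn i)
  have hg01 : ∀ i a, g i a = 0 ∨ g i a = 1 := by
    intro i a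
    rw [hgind i]
    by_cases h : a ∈ Set.range (ee i)
    · right; exact indic_mem h
    · left; exact indic_not_mem h
  have hex1 : ∀ i, g i (ee i 0) = 1 := by
    intro i
    rw [hgind i]
    exact indic_mem (Set.mem_range_self 0)
  -- the partial sums
  set W : ℕ → α → ℝ := fun m => ∑ i ∈ Finset.univ.filter (fun i : Fin r => (i : ℕ) < m),
    lam i • g i with hW
  have hWcons : ∀ m, (incMat G).mulVec (W m) = 0 := fun m =>
    mulVec_sum_zero _ _ _ _ (fun i _ => hcons i)
  have main : ∀ m : ℕ, m ≤ r →
      (∀ a, W m a = 0 ∨ W m a = 1) ∧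
      (∀ i : Fin r, (i : ℕ) < m → lam i = 1 ∧ ∀ a, g i a ≠ 0 → W i.val a = 0) := by
    intro m
    induction m with
    | zero =>
      intro _
      constructor
      · intro a; left; simp [hW]
      · intro i h; omega
    | succ m ih =>
      intro hm1
      have hm : m < r := hm1
      obtain ⟨ihW, ihlam⟩ := ih (le_of_lt hm)
      set k : Fin r := ⟨m, hm⟩ with hk
      have hfeask := hfeas k
      have hle : (0 : α → ℝ) + ∑ i ∈ Finset.univ.filter (fun i => i ≤ k), lam i • g i
          = W (m+1) := by
        rw [zero_add]
        simp only [hW]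
        apply Finset.sum_congr _ (fun _ _ => rfl)
        ext i
        simp [Fin.le_def, Nat.lt_succ_iff, hk]
      rw [hle] at hfeask
      have hbounds : ∀ a, 0 ≤ W (m+1) a ∧ W (m+1) a ≤ 1 :=
        (boxB_le_boxd_iff _).mp hfeask.2
      have hWsucc : W (m+1) = W m + lam k • g k := by
        simp only [hW]
        have hins : Finset.univ.filter (fun i : Fin r => (i : ℕ) < m+1)
            = insert k (Finset.univ.filter (fun i : Fin r => (i : ℕ) < m)) := by
          ext i
          simp only [Finset.mem_insert, Finset.mem_filter, Finset.mem_univ, true_and,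
            Fin.ext_iff, hk]
          omega
        rw [hins, Finset.sum_insert (by simp [hk])]
        exact add_comm _ _
      have hstepA : ∀ a, g k a ≠ 0 → W m a = 0 := by
        intro a hga
        have hga1 : g k a = 1 := (hg01 k a).resolve_left hga
        have hub := (hbounds a).2
        rw [hWsucc] at hub
        simp only [Pi.add_apply, Pi.smul_apply, smul_eq_mul, hga1, mul_one] at hub
        rcases ihW a with h | h
        · exact h
        · exfalso; rw [h] at hub; have := hlampos k; linarith
      have hlamle : lam k ≤ 1 := by
        have hub := (hbounds (ee k 0)).2
        rw [hWsucc] at hub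
        have hWa := hstepA (ee k 0) (by rw [hex1 k]; norm_num)
        simp only [Pi.add_apply, Pi.smul_apply, smul_eq_mul, hex1 k, mul_one, hWa,
          zero_add] at hub
        exact hub
      have hlamk : lam k = 1 := by
        by_contra hne
        have hlt : lam k < 1 := lt_of_le_of_ne hlamle hne
        apply hmax k 1 hlt
        have hflt : Finset.univ.filter (fun i => i < k)
            = Finset.univ.filter (fun i : Fin r => (i : ℕ) < m) := by
          ext i
          simp [Fin.lt_def, hk]
        have hexpr : ((0 : α → ℝ) + ∑ i ∈ Finset.univ.filter (fun i => i < k), lam i • g i)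
            + (1:ℝ) • g k = W m + g k := by
          rw [zero_add, one_smul, hflt]
        rw [hexpr]
        constructor
        · rw [Matrix.mulVec_add, hWcons m, hcons k, add_zero]
        · rw [boxB_le_boxd_iff]
          intro a
          simp only [Pi.add_apply]
          rcases hg01 k a with h | h
          · rw [h, add_zero]
            rcases ihW a with h' | h' <;> rw [h'] <;> norm_num
          · rw [h, hstepA a (by rw [h]; norm_num), zero_add]
            norm_num
      refine ⟨?_, ?_⟩
      · intro a
        rw [hWsucc]
        simp only [Pi.add_apply, Pi.smul_apply, smul_eq_mul, hlamk, one_mul]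
        rcases hg01 k a with h | h
        · rw [h, add_zero]; exact ihW a
        · rw [h, hstepA a (by rw [h]; norm_num), zero_add]; right; rfl
      · intro i hi
        rcases Nat.lt_or_ge i.val m with h | h
        · exact ihlam i h
        · have hkv : (k : ℕ) = m := rfl
          have hik : i = k := Fin.ext (by omega)
          subst hik
          exact ⟨hlamk, hstepA⟩
  have hlam1 : ∀ i : Fin r, lam i = 1 := fun i =>
    ((main r (le_refl r)).2 i i.isLt).1
  have hzero : ∀ i : Fin r, ∀ a, g i a ≠ 0 → W i.val a = 0 := fun i =>
    ((main r (le_refl r)).2 i i.isLt).2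
  -- disjointness
  have hdisj' : ∀ i j : Fin r, (i : ℕ) < (j : ℕ) → ∀ a, g i a ≠ 0 → g j a ≠ 0 → False := by
    intro i j hij a hia hja
    have hW0 := hzero j a hja
    have hi1 : g i a = 1 := (hg01 i a).resolve_left hia
    have hpos : 0 < W j.val a := by
      rw [hW]
      simp only [Finset.sum_apply, Pi.smul_apply, smul_eq_mul]
      have hmem : i ∈ Finset.univ.filter (fun i' : Fin r => (i' : ℕ) < (j : ℕ)) :=
        Finset.mem_filter.mpr ⟨Finset.mem_univ i, hij⟩
      have := Finset.single_le_sum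
        (f := fun i' => lam i' * g i' a)
        (fun i' _ => mul_nonneg (hlampos i').le (hgnn i' a)) hmem
      have hthis : lam i * g i a ≤ ∑ i' ∈ Finset.univ.filter
          (fun i' : Fin r => (i' : ℕ) < (j : ℕ)), lam i' * g i' a := this
      have hpos' : 0 < lam i * g i a := by rw [hi1, mul_one]; exact hlampos i
      linarith
    rw [hW0] at hpos
    exact lt_irrefl 0 hpos
  -- coverage
  have hcover : ∀ a, ∃ i, g i a ≠ 0 := by
    intro a
    by_contra h
    push_neg at h
    have hsa := congrFun hsum a
    simp only [Finset.sum_apply, Pi.smul_apply, smul_eq_mul, Pi.one_apply] at hsa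
    rw [Finset.sum_eq_zero (fun i _ => by rw [not_not.mp (not_not_intro (h i)), mul_zero])] at hsa
    norm_num at hsa
  refine ⟨fun i => Set.range (ee i), fun i => ⟨kk i, ee i, vv i, hee i, hvv i, rfl, hprop i⟩,
    ?_, ?_⟩
  · intro i j hij
    rw [Set.disjoint_left]
    intro a hai haj
    have hia : g i a ≠ 0 := by rw [hgind i]; exact indic_ne_zero_iff.mpr hai
    have hja : g j a ≠ 0 := by rw [hgind j]; exact indic_ne_zero_iff.mpr haj
    rcases lt_or_gt_of_ne (fun h : (i:ℕ) = (j:ℕ) => hij (Fin.ext h)) with h | h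
    · exact hdisj' i j h a hia hja
    · exact hdisj' j i h a hja hia
  · rw [Set.eq_univ_iff_forall]
    intro a
    obtain ⟨i, hi⟩ := hcover a
    rw [hgind i] at hi
    exact Set.mem_iUnion.mpr ⟨i, indic_ne_zero_iff.mp hi⟩

end Walk

/-- Let `G` be a loopless Eulerian digraph with at least one arc and let
`c(G)` be the minimum number of cycles in a partition of the arc set of `G` into arc-disjoint
directed cycles.  Then: (a) the circuit distance from the zero flow to the full flow of the
0/1-circulation polytope of `G` is at most `c(G)`; (b) the minimum length of a list that is
simultaneously a circuit walk from `0` to `1` and a sign-compatible circuit decomposition of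
`1 − 0` equals `c(G)`. -/
theorem circuit_distance_and_scm_distance_vs_cycle_decomposition
    {N α : Type*} [Fintype N] [Fintype α] [DecidableEq N] [DecidableEq α] [Nonempty α]
    (G : Digraph' N α)
    (heul : ∀ v : N, inDeg G v = outDeg G v)
    (cG : ℕ) (hc : IsLeast {c : ℕ | PartitionsIntoCycles G c} cG) :
    (∃ (r : ℕ) (g : Fin r → α → ℝ) (lam : Fin r → ℝ),
        IsCircuitWalk (incMat G) 0 (boxB α) (boxd α) (0 : α → ℝ) (1 : α → ℝ) r g lam ∧
        r ≤ cG) ∧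
    IsLeast {r : ℕ | ∃ (g : Fin r → α → ℝ) (lam : Fin r → ℝ),
        IsCircuitWalk (incMat G) 0 (boxB α) (boxd α) (0 : α → ℝ) (1 : α → ℝ) r g lam ∧
        IsSCDecomp (incMat G) (boxB α) ((1 : α → ℝ) - (0 : α → ℝ)) r g lam} cG := by
  classical
  obtain ⟨hpart, hlb⟩ := hc
  obtain ⟨S, hS, hdisjS, hcov⟩ := hpart
  choose ck ce cv hce hcv hrange hcprop using hS
  have hpoint : ∀ a : α, ∃ i₀ : Fin cG, ∀ i, indic (S i) a = if i = i₀ then 1 else 0 := by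
    intro a
    have ha : a ∈ ⋃ i, S i := hcov ▸ Set.mem_univ a
    obtain ⟨i₀, hi₀⟩ := Set.mem_iUnion.mp ha
    refine ⟨i₀, fun i => ?_⟩
    by_cases h : i = i₀
    · subst h; rw [indic_mem hi₀, if_pos rfl]
    · rw [if_neg h]
      exact indic_not_mem (fun hmem => Set.disjoint_left.mp (hdisjS i i₀ h) hmem hi₀)
  have hcircC : ∀ i : Fin cG, IsCircuit (incMat G) (boxB α) (indic (S i)) := by
    intro i
    rw [hrange i]
    exact cycle_isCircuit G (hce i) (hcv i) (fun j => (hcprop i j).1) (fun j => (hcprop i j).2)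
  have happ : ∀ (T : Finset (Fin cG)) (a : α),
      (∑ i ∈ T, (1:ℝ) • indic (S i)) a = ∑ i ∈ T, indic (S i) a := by
    intro T a
    simp
  have hsum_le : ∀ (T : Finset (Fin cG)) (a : α),
      0 ≤ ∑ i ∈ T, indic (S i) a ∧ ∑ i ∈ T, indic (S i) a ≤ 1 := by
    intro T a
    obtain ⟨i₀, hi₀⟩ := hpoint a
    refine ⟨Finset.sum_nonneg fun i _ => indic_nonneg _ _, ?_⟩
    calc ∑ i ∈ T, indic (S i) a = ∑ i ∈ T, if i = i₀ then (1:ℝ) else 0 :=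
          Finset.sum_congr rfl (fun i _ => hi₀ i)
      _ = if i₀ ∈ T then 1 else 0 := Finset.sum_ite_eq' T i₀ (fun _ => (1:ℝ))
      _ ≤ 1 := by split <;> norm_num
  have hsumone : ∀ a : α, ∑ i, indic (S i) a = 1 := by
    intro a
    obtain ⟨i₀, hi₀⟩ := hpoint a
    rw [Finset.sum_congr rfl (fun i _ => hi₀ i),
      Finset.sum_ite_eq' Finset.univ i₀ (fun _ => (1:ℝ)), if_pos (Finset.mem_univ i₀)]
  have hwalkC : IsCircuitWalk (incMat G) 0 (boxB α) (boxd α) (0 : α → ℝ) (1 : α → ℝ) cG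
      (fun i => indic (S i)) (fun _ => 1) := by
    refine ⟨hcircC, fun _ => one_pos, ?_, ?_, ?_⟩
    · intro k
      constructor
      · rw [zero_add]
        exact mulVec_sum_zero _ _ _ _ (fun i _ => (hcircC i).1)
      · rw [zero_add, boxB_le_boxd_iff]
        intro a
        rw [happ]
        exact hsum_le _ a
    · funext a
      simp only [Pi.add_apply, Pi.zero_apply, zero_add, Finset.sum_apply, Pi.smul_apply,
        smul_eq_mul, one_mul, Pi.one_apply]
      exact hsumone a
    · intro k mu hmu hIn
      have hb := (boxB_le_boxd_iff _).mp hIn.2 (ce k 0)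
      have hmem : ce k 0 ∈ S k := (hrange k) ▸ Set.mem_range_self 0
      have h1 : indic (S k) (ce k 0) = 1 := indic_mem hmem
      simp only [Pi.add_apply, Pi.zero_apply, zero_add, Pi.smul_apply, smul_eq_mul, h1,
        mul_one, Finset.sum_apply, one_mul] at hb
      have h0 : 0 ≤ ∑ i ∈ Finset.univ.filter (fun i => i < k), indic (S i) (ce k 0) :=
        (hsum_le _ _).1
      have hmu' : (1:ℝ) < mu := hmu
      linarith [hb.2]
  constructor
  · exact ⟨cG, fun i => indic (S i), fun _ => 1, hwalkC, le_refl cG⟩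
  · constructor
    · refine ⟨fun i => indic (S i), fun _ => 1, hwalkC, hcircC, fun _ => one_pos, ?_, ?_⟩
      · funext a
        simp only [Finset.sum_apply, Pi.smul_apply, smul_eq_mul, one_mul, Pi.sub_apply,
          Pi.one_apply, Pi.zero_apply, sub_zero]
        exact hsumone a
      · intro i j idx
        rcases idx with a | a
        · rw [boxB_mulVec, boxB_mulVec]
          simp only [Sum.elim_inl]
          exact mul_nonneg (indic_nonneg _ _) (indic_nonneg _ _)
        · rw [boxB_mulVec, boxB_mulVec]
          simp only [Sum.elim_inr, Pi.neg_apply, neg_mul_neg]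
          exact mul_nonneg (indic_nonneg _ _) (indic_nonneg _ _)
    · intro r hr
      obtain ⟨g, lam, hwalk, hdec⟩ := hr
      exact hlb (walk_decomp_partition G r g lam hwalk hdec)
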